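/- Let Z be a real random variable such that for all t > 0, P(Z ≥ E[Z] + t) ≤ exp(-t²/(2(aE[Z] + b + at))) and P(Z ≤ E[Z] - t) ≤ exp(-t²/(2(aE[Z] + b + t/3))) with a > 1/3 and b ≥ 0. Then for any δ ∈ (0,1), with probability at least 1 - δ: |Z - E[Z]| ≤ a·ln(2/δ) + sqrt(2·ln(2/δ)·(aE[Z] + b) + a²·(ln(2/δ))²). -/
import Mathlib


open MeasureTheory Real

/-- A Bernstein-type two-sided tail bound implies the high-probability deviation
bound of Corollary 1. -/
theorem stmt_4
    {Ω : Type*} [MeasurableSpace Ω] (μ : Measure Ω) [IsProbabilityMeasure μ]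
    (Z : Ω → ℝ) (hZmeas : Measurable Z) (hZint : Integrable Z μ)
    (a b : ℝ) (ha : 1 / 3 < a) (hb : 0 ≤ b)
    (m : ℝ) (hm : m = ∫ ω, Z ω ∂μ) (hm0 : 0 ≤ m)
    (hup : ∀ t > 0, (μ {ω | m + t ≤ Z ω}).toReal ≤ exp (-(t ^ 2) / (2 * (a * m + b + a * t))))
    (hdown : ∀ t > 0, (μ {ω | Z ω ≤ m - t}).toReal ≤ exp (-(t ^ 2) / (2 * (a * m + b + t / 3))))
    (δ : ℝ) (hδ0 : 0 < δ) (hδ1 : δ < 1) :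
    (1 : ℝ) - δ ≤
      (μ {ω | |Z ω - m| ≤
        a * Real.log (2 / δ)
          + Real.sqrt (2 * Real.log (2 / δ) * (a * m + b)
              + a ^ 2 * (Real.log (2 / δ)) ^ 2)}).toReal := by
  set L := Real.log (2 / δ) with hLdef
  have hL : 0 < L := Real.log_pos (by rw [lt_div_iff₀ hδ0]; linarith)
  have ha0 : 0 < a := lt_trans (by norm_num) ha
  have hmb : 0 ≤ a * m + b := add_nonneg (mul_nonneg ha0.le hm0) hb
  have hrad : 0 ≤ 2 * L * (a * m + b) + a ^ 2 * L ^ 2 := by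
    have : 0 ≤ 2 * L * (a * m + b) := mul_nonneg (by positivity) hmb
    nlinarith [sq_nonneg (a * L)]
  set s := Real.sqrt (2 * L * (a * m + b) + a ^ 2 * L ^ 2) with hsdef
  have hs0 : 0 ≤ s := Real.sqrt_nonneg _
  have hs2 : s ^ 2 = 2 * L * (a * m + b) + a ^ 2 * L ^ 2 := Real.sq_sqrt hrad
  set t := a * L + s with htdef
  have ht : 0 < t := by positivity
  have hden : 0 < 2 * (a * m + b + a * t) := by nlinarith
  have hden' : 0 < 2 * (a * m + b + t / 3) := by nlinarith
  have hkey : t ^ 2 = L * (2 * (a * m + b + a * t)) := by nlinarith [hs2]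
  have hexpL : Real.exp (-L) = δ / 2 := by
    rw [Real.exp_neg, hLdef, Real.exp_log (by positivity)]
    field_simp
  have hup' : (μ {ω | m + t ≤ Z ω}).toReal ≤ δ / 2 := by
    have h1 := hup t ht
    have heq : -(t ^ 2) / (2 * (a * m + b + a * t)) = -L := by
      rw [div_eq_iff hden.ne']; linarith [hkey]
    rw [heq, hexpL] at h1; exact h1
  have hdown' : (μ {ω | Z ω ≤ m - t}).toReal ≤ δ / 2 := by
    have h1 := hdown t ht
    have h2 : -(t ^ 2) / (2 * (a * m + b + t / 3)) ≤ -L := by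
      rw [div_le_iff₀ hden']
      have h3 : t / 3 ≤ a * t := by nlinarith
      nlinarith [hkey, mul_le_mul_of_nonneg_left h3 hL.le]
    calc (μ {ω | Z ω ≤ m - t}).toReal ≤ _ := h1
      _ ≤ Real.exp (-L) := Real.exp_le_exp.mpr h2
      _ = δ / 2 := hexpL
  set A := {ω | |Z ω - m| ≤ t} with hA
  have hAmeas : MeasurableSet A := by
    exact measurableSet_le ((hZmeas.sub measurable_const).abs) measurable_const
  have hsub : Aᶜ ⊆ {ω | m + t ≤ Z ω} ∪ {ω | Z ω ≤ m - t} := by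
    intro ω hω
    simp only [hA, Set.mem_compl_iff, Set.mem_setOf_eq, not_le] at hω
    rcases lt_abs.mp hω with h | h
    · left; simp only [Set.mem_setOf_eq]; linarith
    · right; simp only [Set.mem_setOf_eq]; linarith
  have hmeas1 : (μ Aᶜ).toReal ≤ (μ {ω | m + t ≤ Z ω}).toReal + (μ {ω | Z ω ≤ m - t}).toReal := by
    have h1 : μ Aᶜ ≤ μ {ω | m + t ≤ Z ω} + μ {ω | Z ω ≤ m - t} :=
      (measure_mono hsub).trans (measure_union_le _ _)
    have h2 := ENNReal.toReal_mono (by finiteness) h1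
    rwa [ENNReal.toReal_add (by finiteness) (by finiteness)] at h2
  have hcompl : (μ A).toReal + (μ Aᶜ).toReal = 1 := by
    have := measure_add_measure_compl (μ := μ) hAmeas
    have h2 : (μ A + μ Aᶜ).toReal = (1 : ENNReal).toReal := by rw [this]; simp
    rwa [ENNReal.toReal_add (by finiteness) (by finiteness), ENNReal.toReal_one] at h2
  linarith
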